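/- A class H = dE_0 − m_1E_1 − ⋯ − m_rE_r in Pic_r is E-standard if and only if there exist non-negative integers a, b, c, α_3, …, α_r such that H = aE_0 + b(E_0 − E_1) + c(2E_0 − E_1 − E_2) + Σ_{i=3}^{r} α_i C_i. -/
import Mathlib


open Finset

/-- The intersection form on `Pic_r = ℤ^{r+1}`: the symmetric bilinear form with
`E_0·E_0 = 1`, `E_i·E_i = -1` for `1 ≤ i ≤ r`, and `E_i·E_j = 0` for `i ≠ j`. -/
def inter {r : ℕ} (x y : Fin (r + 1) → ℤ) : ℤ :=
  2 * (x 0 * y 0) - ∑ i, x i * y i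

/-- The standard basis class `E_i` of `Pic_r`. -/
def Eb (r : ℕ) (i : Fin (r + 1)) : Fin (r + 1) → ℤ :=
  fun j => if j = i then 1 else 0

/-- The canonical class `K = -3E_0 + E_1 + ⋯ + E_r`. -/
def Kc (r : ℕ) : Fin (r + 1) → ℤ :=
  fun j => if j = 0 then -3 else 1

/-- The roots `r_0 = E_0 - E_1 - E_2 - E_3` and `r_i = E_i - E_{i+1}` for `1 ≤ i ≤ r-1`. -/
def root (r : ℕ) (i : Fin r) : Fin (r + 1) → ℤ :=
  if (i : ℕ) = 0 then Eb r 0 - Eb r 1 - Eb r 2 - Eb r 3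
  else Eb r i.castSucc - Eb r i.succ

/-- The reflection `σ_v(x) = x + (x·v) v` in the root `v`. -/
def reflect {r : ℕ} (v x : Fin (r + 1) → ℤ) : Fin (r + 1) → ℤ :=
  x + inter x v • v

/-- Membership in the Weyl group `W_r`: the group of transformations of `Pic_r`
generated by the reflections `σ_i(x) = x + (x·r_i) r_i`, `0 ≤ i ≤ r-1` (since each
generator is an involution, the submonoid generated coincides with the subgroup
generated). -/
def InWeyl (r : ℕ) (f : (Fin (r + 1) → ℤ) → (Fin (r + 1) → ℤ)) : Prop :=
  f ∈ Submonoid.closure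
    { g : Function.End (Fin (r + 1) → ℤ) | ∃ i : Fin r, g = reflect (root r i) }

/-- `H = dE_0 - m_1E_1 - ⋯ - m_rE_r` (so `d = H 0`, `m_i = -H i`) is E-standard:
`d ≥ m_1 ≥ ⋯ ≥ m_r ≥ 0`, `d ≥ m_1 + m_2` and `d ≥ m_1 + m_2 + m_3`. -/
def EStandard (r : ℕ) (H : Fin (r + 1) → ℤ) : Prop :=
  -H 1 ≤ H 0 ∧
  (∀ i j : Fin (r + 1), 1 ≤ (i : ℕ) → i ≤ j → -H j ≤ -H i) ∧
  0 ≤ -H (Fin.last r) ∧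
  -H 1 + -H 2 ≤ H 0 ∧
  -H 1 + -H 2 + -H 3 ≤ H 0

/-- `H = dE_0 - m_1E_1 - ⋯ - m_rE_r` is E-semi-standard: `d ≥ 0`,
`d ≥ m_1 ≥ ⋯ ≥ m_r` and `d ≥ m_1 + m_2 + m_3` (the `m_i` may be negative). -/
def ESemiStandard (r : ℕ) (H : Fin (r + 1) → ℤ) : Prop :=
  0 ≤ H 0 ∧
  -H 1 ≤ H 0 ∧
  (∀ i j : Fin (r + 1), 1 ≤ (i : ℕ) → i ≤ j → -H j ≤ -H i) ∧
  -H 1 + -H 2 + -H 3 ≤ H 0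

/-- A class is standard if its image under some element of `W_r` is E-standard. -/
def Standard (r : ℕ) (H : Fin (r + 1) → ℤ) : Prop :=
  ∃ f, InWeyl r f ∧ EStandard r (f H)

/-- A class is semi-standard if its image under some element of `W_r` is
E-semi-standard. -/
def SemiStandard (r : ℕ) (H : Fin (r + 1) → ℤ) : Prop :=
  ∃ f, InWeyl r f ∧ ESemiStandard r (f H)

/-- An exceptional class: an element of the `W_r`-orbit of `E_r`. -/
def Exceptional (r : ℕ) (x : Fin (r + 1) → ℤ) : Prop :=
  ∃ f, InWeyl r f ∧ x = f (Eb r (Fin.last r))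

/-- A line class: an element of the `W_r`-orbit of `E_0`. -/
def LineClass (r : ℕ) (x : Fin (r + 1) → ℤ) : Prop :=
  ∃ f, InWeyl r f ∧ x = f (Eb r 0)

/-- A pencil class: an element of the `W_r`-orbit of `E_0 - E_1`. -/
def PencilClass (r : ℕ) (x : Fin (r + 1) → ℤ) : Prop :=
  ∃ f, InWeyl r f ∧ x = f (Eb r 0 - Eb r 1)

/-- The elliptic generating class `C_i = 3E_0 - E_1 - ⋯ - E_i`. -/
def Cc (r : ℕ) (i : Fin (r + 1)) : Fin (r + 1) → ℤ :=
  fun j => if j = 0 then 3 else if j ≤ i then -1 else 0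

/-- The Euler characteristic `χ(H) = 1 + (H·H - H·K)/2`. -/
def chi (r : ℕ) (H : Fin (r + 1) → ℤ) : ℤ :=
  1 + (inter H H - inter H (Kc r)) / 2

namespace EstdGenAux

lemma val1 (r : ℕ) (hr : 3 ≤ r) : ((1 : Fin (r+1)) : ℕ) = 1 := by
  have : ((1 : Fin (r+1)) : ℕ) = 1 % (r+1) := rfl
  rw [this, Nat.mod_eq_of_lt (by omega)]

lemma val2 (r : ℕ) (hr : 3 ≤ r) : ((2 : Fin (r+1)) : ℕ) = 2 := by
  have : ((2 : Fin (r+1)) : ℕ) = 2 % (r+1) := rfl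
  rw [this, Nat.mod_eq_of_lt (by omega)]

lemma val3 (r : ℕ) (hr : 3 ≤ r) : ((3 : Fin (r+1)) : ℕ) = 3 := by
  have : ((3 : Fin (r+1)) : ℕ) = 3 % (r+1) := rfl
  rw [this, Nat.mod_eq_of_lt (by omega)]

lemma sum_val {M : Type*} [AddCommMonoid M] (r : ℕ) (hr : 3 ≤ r) (g : ℕ → M) :
    ∑ i ∈ Icc (3 : Fin (r+1)) (Fin.last r), g i.val = ∑ n ∈ Icc 3 r, g n := by
  conv_rhs => rw [← val3 r hr, ← Fin.val_last r, ← Fin.map_valEmbedding_Icc, Finset.sum_map]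
  rfl

lemma tele (f : ℕ → ℤ) (N k : ℕ) (h : k ≤ N) :
    ∑ n ∈ Icc k N, (f n - f (n+1)) = f k - f (N+1) := by
  induction N, h using Nat.le_induction with
  | base => simp
  | succ n hn ih => rw [Finset.sum_Icc_succ_top (by omega), ih]; ring

lemma rhs_apply (r : ℕ) (hr : 3 ≤ r) (a b c : ℕ) (α : Fin (r+1) → ℕ) (β : ℕ → ℤ)
    (hβ : ∀ i : Fin (r+1), 3 ≤ (i:ℕ) → ((α i : ℤ)) = β (i:ℕ)) (j : Fin (r+1)) :
    ((a : ℤ) • Eb r 0 + (b : ℤ) • (Eb r 0 - Eb r 1)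
        + (c : ℤ) • ((2 : ℤ) • Eb r 0 - Eb r 1 - Eb r 2)
        + ∑ i ∈ Finset.Icc (3 : Fin (r + 1)) (Fin.last r),
            (α i : ℤ) • Cc r i) j
    = if (j:ℕ) = 0 then (a:ℤ) + b + 2*c + 3 * ∑ n ∈ Finset.Icc 3 r, β n
      else (if (j:ℕ) = 1 then -(b:ℤ) - c else if (j:ℕ) = 2 then -(c:ℤ) else 0)
          - ∑ n ∈ Finset.Icc (max 3 (j:ℕ)) r, β n := by
  have h1v := val1 r hr
  have h2v := val2 r hr
  have h3v := val3 r hr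
  have hsum : (∑ i ∈ Finset.Icc (3 : Fin (r+1)) (Fin.last r),
        (α i : ℤ) • Cc r i) j
      = ∑ n ∈ Finset.Icc 3 r,
          β n * (if (j:ℕ) = 0 then 3 else if (j:ℕ) ≤ n then (-1:ℤ) else 0) := by
    rw [Finset.sum_apply]
    rw [← sum_val r hr (fun n => β n * (if (j:ℕ) = 0 then 3 else if (j:ℕ) ≤ n then (-1:ℤ) else 0))]
    refine Finset.sum_congr rfl fun i hi => ?_
    rw [Finset.mem_Icc] at hi
    have h3i : 3 ≤ (i:ℕ) := by
      have := hi.1; rw [Fin.le_def, h3v] at this; exact this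
    rw [Pi.smul_apply, smul_eq_mul, hβ i h3i]
    congr 1
    simp only [Cc]
    by_cases hj0 : j = 0
    · subst hj0; rw [if_pos rfl, if_pos (by simp)]
    · have hv0 : ¬((j:ℕ) = 0) := fun h => hj0 (Fin.ext (by simp [h]))
      rw [if_neg hj0, if_neg hv0]
      by_cases hle : j ≤ i
      · rw [if_pos hle, if_pos (by rwa [Fin.le_def] at hle)]
      · rw [if_neg hle, if_neg (by rw [Fin.le_def] at hle; exact hle)]
  simp only [Pi.add_apply, Pi.smul_apply, Pi.sub_apply, smul_eq_mul, hsum, Eb]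
  by_cases h0 : (j:ℕ) = 0
  · have hj : j = 0 := Fin.ext (by simp [h0])
    subst hj
    norm_num
    have n2 : ¬((0:Fin (r+1)) = 2) := by
      rw [Fin.ext_iff, h2v]; simp
    rw [if_neg (show ¬ r = 0 by omega), if_neg n2, ← Finset.sum_mul]
    ring
  · have hne0 : ¬(j = 0) := fun h => h0 (by rw [h]; simp)
    simp only [if_neg h0, if_neg hne0]
    have hsum2 : ∑ n ∈ Finset.Icc 3 r, β n * (if (j:ℕ) ≤ n then (-1:ℤ) else 0)
        = -∑ n ∈ Finset.Icc (max 3 (j:ℕ)) r, β n := by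
      have hf : Finset.Icc (max 3 (j:ℕ)) r = (Finset.Icc 3 r).filter (fun n => (j:ℕ) ≤ n) := by
        ext n; simp only [Finset.mem_filter, Finset.mem_Icc]; omega
      rw [hf, Finset.sum_filter, ← Finset.sum_neg_distrib]
      refine Finset.sum_congr rfl fun n hn => ?_
      split_ifs <;> ring
    rw [hsum2]
    have hj1 : (j = 1) ↔ ((j:ℕ) = 1) := by
      constructor
      · intro h; rw [h, h1v]
      · intro h; exact Fin.ext (by rw [h1v, h])
    have hj2 : (j = 2) ↔ ((j:ℕ) = 2) := by
      constructor
      · intro h; rw [h, h2v]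
      · intro h; exact Fin.ext (by rw [h2v, h])
    by_cases h1 : (j:ℕ) = 1
    · rw [if_pos (hj1.mpr h1), if_pos h1, if_neg (show ¬ j = 2 by rw [hj2]; omega)]
      ring
    · rw [if_neg (show ¬ j = 1 by rw [hj1]; exact h1), if_neg h1]
      by_cases h2 : (j:ℕ) = 2
      · rw [if_pos (hj2.mpr h2), if_pos h2]; ring
      · rw [if_neg (by rw [hj2]; exact h2), if_neg h2]; ring

end EstdGenAux


theorem estandard_iff_generating (r : ℕ) (hr : 3 ≤ r) (H : Fin (r + 1) → ℤ) :
    EStandard r H ↔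
      ∃ (a b c : ℕ) (α : Fin (r + 1) → ℕ),
        H = (a : ℤ) • Eb r 0 + (b : ℤ) • (Eb r 0 - Eb r 1)
          + (c : ℤ) • ((2 : ℤ) • Eb r 0 - Eb r 1 - Eb r 2)
          + ∑ i ∈ Finset.Icc (3 : Fin (r + 1)) (Fin.last r), (α i : ℤ) • Cc r i := by
  have h1v := EstdGenAux.val1 r hr
  have h2v := EstdGenAux.val2 r hr
  have h3v := EstdGenAux.val3 r hr
  constructor
  · rintro ⟨hA, hmono, hlast, hB, hC⟩
    have hb12 : -H 2 ≤ -H 1 := hmono 1 2 (by rw [h1v]) (by rw [Fin.le_def, h1v, h2v]; omega)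
    have hb23 : -H 3 ≤ -H 2 := hmono 2 3 (by rw [h2v]; omega) (by rw [Fin.le_def, h2v, h3v]; omega)
    set m : ℕ → ℤ := fun n => if h : n < r + 1 then -H ⟨n, h⟩ else 0 with hm
    have hmr1 : m (r + 1) = 0 := by simp [hm]
    have hmval : ∀ (k : ℕ) (h : k < r + 1), m k = -H ⟨k, h⟩ := by
      intro k h; simp only [hm]; rw [dif_pos h]
    have hβnn : ∀ n, 3 ≤ n → n ≤ r → 0 ≤ m n - m (n + 1) := by
      intro n h3 hle
      rcases eq_or_lt_of_le hle with hn | hn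
      · rw [hn, hmr1]
        have hmrr : m r = -H (Fin.last r) := by
          simp only [hm]
          rw [dif_pos (by omega : r < r + 1)]
          rfl
        rw [hmrr]
        linarith
      · rw [hmval n (by omega), hmval (n + 1) (by omega)]
        have := hmono ⟨n, by omega⟩ ⟨n + 1, by omega⟩ (by exact Nat.one_le_of_lt h3)
          (by rw [Fin.le_def]; exact Nat.le_succ n)
        linarith [this]
    have hTel : ∀ k, 3 ≤ k → k ≤ r → ∑ n ∈ Finset.Icc k r, (m n - m (n + 1)) = m k := by
      intro k h3 hk
      rw [EstdGenAux.tele m r k hk, hmr1, sub_zero]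
    have ha : ((H 0 + H 1 + H 2 + H 3).toNat : ℤ) = H 0 + H 1 + H 2 + H 3 :=
      Int.toNat_of_nonneg (by linarith)
    have hb : ((H 2 - H 1).toNat : ℤ) = H 2 - H 1 := Int.toNat_of_nonneg (by linarith)
    have hc : ((H 3 - H 2).toNat : ℤ) = H 3 - H 2 := Int.toNat_of_nonneg (by linarith)
    refine ⟨(H 0 + H 1 + H 2 + H 3).toNat, (H 2 - H 1).toNat, (H 3 - H 2).toNat,
      fun i => (m i.val - m (i.val + 1)).toNat, ?_⟩
    have hβn : ∀ i : Fin (r + 1), 3 ≤ (i : ℕ) →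
        (((fun i : Fin (r+1) => (m i.val - m (i.val + 1)).toNat) i : ℤ))
          = (fun n => m n - m (n + 1)) (i : ℕ) := by
      intro i h3
      exact Int.toNat_of_nonneg (hβnn i.val h3 (by have := i.isLt; omega))
    funext j
    rw [EstdGenAux.rhs_apply r hr _ _ _ _ (fun n => m n - m (n + 1)) hβn j]
    have hm3 : (⟨3, by omega⟩ : Fin (r + 1)) = 3 := Fin.ext (by rw [h3v])
    by_cases h0 : (j : ℕ) = 0
    · rw [if_pos h0]
      have hj : j = 0 := Fin.ext (by rw [h0]; rfl)
      subst hj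
      rw [ha, hb, hc, hTel 3 le_rfl hr, hmval 3 (by omega), hm3]
      ring
    · rw [if_neg h0]
      by_cases hv1 : (j : ℕ) = 1
      · rw [if_pos hv1, show max 3 (j : ℕ) = 3 by omega, hTel 3 le_rfl hr,
          hmval 3 (by omega), hm3]
        have hj : j = 1 := Fin.ext (by rw [h1v, hv1])
        subst hj
        rw [hb, hc]
        ring
      · rw [if_neg hv1]
        by_cases hv2 : (j : ℕ) = 2
        · rw [if_pos hv2, show max 3 (j : ℕ) = 3 by omega, hTel 3 le_rfl hr,
            hmval 3 (by omega), hm3]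
          have hj : j = 2 := Fin.ext (by rw [h2v, hv2])
          subst hj
          rw [hc]
          ring
        · rw [if_neg hv2, show max 3 (j : ℕ) = (j : ℕ) by omega,
            hTel (j : ℕ) (by omega) (by have := j.isLt; omega), hmval (j : ℕ) j.isLt,
            Fin.eta]
          ring
  · rintro ⟨a, b, c, α, rfl⟩
    set β : ℕ → ℤ := fun n => if h : n < r + 1 then (α ⟨n, h⟩ : ℤ) else 0 with hβ
    have hβn : ∀ i : Fin (r + 1), 3 ≤ (i : ℕ) → ((α i : ℤ)) = β (i : ℕ) := by
      intro i _
      simp only [hβ]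
      rw [dif_pos i.isLt, Fin.eta]
    have key := fun j => EstdGenAux.rhs_apply r hr a b c α β hβn j
    have βnn : ∀ n, 0 ≤ β n := by
      intro n
      simp only [hβ]
      split_ifs
      · exact Int.natCast_nonneg _
      · exact le_refl 0
    have Tnn : ∀ s : Finset ℕ, 0 ≤ ∑ n ∈ s, β n :=
      fun s => Finset.sum_nonneg fun n _ => βnn n
    have Tmono : ∀ k k' : ℕ, k ≤ k' →
        ∑ n ∈ Finset.Icc (max 3 k') r, β n ≤ ∑ n ∈ Finset.Icc (max 3 k) r, β n := by
      intro k k' hk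
      exact Finset.sum_le_sum_of_subset_of_nonneg
        (Finset.Icc_subset_Icc (by omega) le_rfl) (fun n _ _ => βnn n)
    set X := (a : ℤ) • Eb r 0 + (b : ℤ) • (Eb r 0 - Eb r 1)
          + (c : ℤ) • ((2 : ℤ) • Eb r 0 - Eb r 1 - Eb r 2)
          + ∑ i ∈ Finset.Icc (3 : Fin (r + 1)) (Fin.last r), (α i : ℤ) • Cc r i with hX
    have k0 : X 0 = (a : ℤ) + b + 2 * c + 3 * ∑ n ∈ Finset.Icc 3 r, β n := by
      have := key 0
      rwa [if_pos (show ((0 : Fin (r+1)) : ℕ) = 0 from rfl)] at this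
    have kgen : ∀ x : Fin (r + 1), 1 ≤ (x : ℕ) →
        -X x = (if (x : ℕ) = 1 then (b : ℤ) + c else if (x : ℕ) = 2 then (c : ℤ) else 0)
          + ∑ n ∈ Finset.Icc (max 3 (x : ℕ)) r, β n := by
      intro x hx
      have := key x
      rw [if_neg (by omega)] at this
      rw [this]
      split_ifs <;> ring
    have k1 : -X 1 = (b : ℤ) + c + ∑ n ∈ Finset.Icc 3 r, β n := by
      have := kgen 1 (by rw [h1v])
      rwa [h1v, if_pos rfl, show max 3 1 = 3 by omega] at this
    have k2 : -X 2 = (c : ℤ) + ∑ n ∈ Finset.Icc 3 r, β n := by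
      have := kgen 2 (by rw [h2v]; omega)
      rwa [h2v, if_neg (by omega), if_pos rfl, show max 3 2 = 3 by omega] at this
    have k3 : -X 3 = ∑ n ∈ Finset.Icc 3 r, β n := by
      have := kgen 3 (by rw [h3v]; omega)
      rwa [h3v, if_neg (by omega), if_neg (by omega), show max 3 3 = 3 by omega,
        zero_add] at this
    have klast : -X (Fin.last r) = ∑ n ∈ Finset.Icc r r, β n := by
      have := kgen (Fin.last r) (by rw [Fin.val_last]; omega)
      rwa [Fin.val_last, if_neg (by omega), if_neg (by omega), show max 3 r = r by omega,
        zero_add] at this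
    unfold EStandard
    refine ⟨?_, ?_, ?_, ?_, ?_⟩
    · linarith [k0, k1, Int.natCast_nonneg a, Int.natCast_nonneg c, Tnn (Finset.Icc 3 r)]
    · intro i j h1i hij
      have hij' : (i : ℕ) ≤ (j : ℕ) := hij
      rw [kgen i h1i, kgen j (by omega)]
      have hT := Tmono (i : ℕ) (j : ℕ) hij'
      split_ifs <;>
        first
          | omega
          | linarith [hT, Int.natCast_nonneg b, Int.natCast_nonneg c]
    · rw [klast]
      exact Tnn _
    · linarith [k0, k1, k2, Int.natCast_nonneg a, Tnn (Finset.Icc 3 r)]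
    · linarith [k0, k1, k2, k3, Int.natCast_nonneg a, Tnn (Finset.Icc 3 r)]
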